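/- With the same setup, if D ⊆ (2^ℕ)^Y is comeager, written as a countable intersection of dense open sets each of whose relevant fibers over Γ-translates of restrictions of ζ are nonempty (as in the dense-open case), then {g ∈ G : g·ζ ∈ D} is comeager in G. -/
import Mathlib


/-- The group `⊕_{n∈ℕ}ℤ₂` of finitely supported sequences, with the discrete topology. -/
local instance : TopologicalSpace (ℕ →₀ ZMod 2) := ⊥

private instance : DiscreteTopology (ℕ →₀ ZMod 2) := ⟨rfl⟩

private theorem perm_dense {Y : Type*} (Dn : Set (Y → ℕ → ZMod 2)) (ho : IsOpen Dn)
    (ζ : Y → ℕ → ZMod 2)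
    (hfib : ∀ (Y₀ : Finset Y) (γ : Y → ℕ →₀ ZMod 2), {y | γ y ≠ 0}.Finite →
      ∃ b ∈ Dn, ∀ y ∈ Y₀, b y = fun i => γ y i + ζ y i) :
    Dense {g : Y → ℕ →₀ ZMod 2 | (fun y i => g y i + ζ y i) ∈ Dn} := by
  classical
  rw [dense_iff_inter_open]
  rintro U hU ⟨x, hx⟩
  obtain ⟨F, V, hV, hVU⟩ := isOpen_pi_iff.mp hU x hx
  set γ : Y → ℕ →₀ ZMod 2 := fun y => if y ∈ F then x y else 0 with hγ
  have hγfin : {y | γ y ≠ 0}.Finite := by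
    refine Set.Finite.subset F.finite_toSet ?_
    intro y hy
    by_contra h
    simp only [hγ, Set.mem_setOf_eq, Finset.mem_coe] at hy h
    exact hy (by simp [h])
  obtain ⟨b, hb, hbF⟩ := hfib F γ hγfin
  obtain ⟨F', W, hW, hWD⟩ := isOpen_pi_iff.mp ho b hb
  have key : ∀ y ∈ F', ∃ (I : Finset ℕ) (u : ℕ → Set (ZMod 2)),
      (∀ i ∈ I, IsOpen (u i) ∧ b y i ∈ u i) ∧ Set.pi ↑I u ⊆ W y :=
    fun y hy => isOpen_pi_iff.mp (hW y hy).1 (b y) (hW y hy).2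
  choose! I u hIu hIsub using key
  set g : Y → ℕ →₀ ZMod 2 := fun y =>
    if y ∈ F then x y else
      Finsupp.onFinset (I y) (fun i => if i ∈ I y then b y i + ζ y i else 0)
        (fun i hi => by by_contra h; simp [h] at hi) with hg
  have hζself : ∀ (y : Y) (i : ℕ), ζ y i + ζ y i = 0 := fun y i =>
    CharTwo.add_self_eq_zero _
  refine ⟨g, hVU ?_, ?_⟩
  · intro y hy
    have : g y = x y := by simp only [hg]; rw [if_pos (Finset.mem_coe.mp hy)]
    rw [this]
    exact (hV y hy).2
  · show (fun y i => g y i + ζ y i) ∈ Dn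
    apply hWD
    intro y hy
    by_cases hyF : y ∈ F
    · have : (fun i => g y i + ζ y i) = b y := by
        rw [hbF y hyF]
        funext i
        simp only [hg, hγ, if_pos hyF]
      simpa [this] using (hW y hy).2
    · apply hIsub y hy
      intro i hi
      simp only [Finset.mem_coe] at hi
      have : g y i = b y i + ζ y i := by
        simp only [hg, if_neg hyF, Finsupp.onFinset_apply, if_pos hi]
      show (g y) i + ζ y i ∈ u y i
      rw [this, add_assoc, hζself, add_zero]
      exact (hIu y hy i hi).2

/-- Permutation lemma (comeager case): if `D ⊆ (2^ℕ)^Y` is a countable intersection of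
dense open sets, each of whose fibers over `Γ`-translates of restrictions of `ζ` are
nonempty, then `{g ∈ G : g·ζ ∈ D}` is comeager in `G = (⊕ℤ₂)^Y`. -/
theorem permutation_lemma_comeager {Y : Type*} [Countable Y] [Infinite Y]
    (D : Set (Y → ℕ → ZMod 2)) (Dn : ℕ → Set (Y → ℕ → ZMod 2))
    (hD : D = ⋂ n, Dn n)
    (hopen : ∀ n, IsOpen (Dn n)) (hdense : ∀ n, Dense (Dn n))
    (ζ : Y → ℕ → ZMod 2)
    (hfib : ∀ n, ∀ (Y₀ : Finset Y) (γ : Y → ℕ →₀ ZMod 2), {y | γ y ≠ 0}.Finite →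
      ∃ b ∈ Dn n, ∀ y ∈ Y₀, b y = fun i => γ y i + ζ y i) :
    {g : Y → ℕ →₀ ZMod 2 | (fun y i => g y i + ζ y i) ∈ D} ∈
      residual (Y → ℕ →₀ ZMod 2) := by
  have hT : Continuous fun (g : Y → ℕ →₀ ZMod 2) => (fun y i => g y i + ζ y i) :=
    continuous_pi fun y =>
      (continuous_of_discreteTopology
        (f := fun (h : ℕ →₀ ZMod 2) => (fun i => h i + ζ y i))).comp (continuous_apply y)
  have heq : {g : Y → ℕ →₀ ZMod 2 | (fun y i => g y i + ζ y i) ∈ D} =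
      ⋂ n, {g : Y → ℕ →₀ ZMod 2 | (fun y i => g y i + ζ y i) ∈ Dn n} := by
    rw [hD]; ext g; simp
  rw [heq]
  refine (countable_iInter_mem).mpr fun n => ?_
  exact residual_of_dense_open ((hopen n).preimage hT)
    (perm_dense (Dn n) (hopen n) ζ (hfib n))
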